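/- Composition of projections approximates intersection projection: if X is a d-partite (q,γ)-product, then for any f : X(d) → ℝ and any T, T' ⊆ [d], ‖E_T E_{T'} f − E_{T∩T'} f‖_q ≤ γ |T||T'| ‖f‖_q. -/

import Mathlib

open Finset BigOperators

/-- Conditional expectation operator `E_T` on a `d`-partite space:
`E_T f (x) = E[f(y) | y_T = x_T]` under the (finitely supported) measure `μ`. -/
noncomputable def projE {d : ℕ} {Ω : Type} [Fintype Ω] [DecidableEq Ω]
    (μ : (Fin d → Ω) → ℝ) (T : Finset (Fin d))
    (f : (Fin d → Ω) → ℝ) (x : Fin d → Ω) : ℝ :=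
  (∑ y : Fin d → Ω, if ∀ i ∈ T, y i = x i then μ y * f y else 0) /
  (∑ y : Fin d → Ω, if ∀ i ∈ T, y i = x i then μ y else 0)

/-- Efron–Stein component `f^{=S} = ∑_{T ⊆ S} (-1)^{|S|-|T|} E_T f`. -/
noncomputable def esComp {d : ℕ} {Ω : Type} [Fintype Ω] [DecidableEq Ω]
    (μ : (Fin d → Ω) → ℝ) (S : Finset (Fin d))
    (f : (Fin d → Ω) → ℝ) : (Fin d → Ω) → ℝ :=
  fun x => ∑ T ∈ S.powerset, (-1 : ℝ) ^ (S.card - T.card) * projE μ T f x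

/-- `L^q` norm with respect to the probability mass function `μ`. -/
noncomputable def pnorm {α : Type} [Fintype α] (μ : α → ℝ) (q : ℝ) (f : α → ℝ) : ℝ :=
  (∑ x, μ x * |f x| ^ q) ^ (1 / q)

/-- Conditional (link) measure obtained from `μ` by conditioning the coordinates
in `R` to agree with `z`. -/
noncomputable def condMeasure {d : ℕ} {Ω : Type} [Fintype Ω] [DecidableEq Ω]
    (μ : (Fin d → Ω) → ℝ) (R : Finset (Fin d)) (z : Fin d → Ω) :
    (Fin d → Ω) → ℝ :=
  fun y => (if ∀ i ∈ R, y i = z i then μ y else 0) /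
    (∑ y' : Fin d → Ω, if ∀ i ∈ R, y' i = z i then μ y' else 0)

/-- Expectation with respect to the mass function `μ`. -/
noncomputable def expect {α : Type} [Fintype α] (μ : α → ℝ) (f : α → ℝ) : ℝ :=
  ∑ x, μ x * f x

/-- `X` is a `(q,γ)`-product: in every link of codimension at least `2`
(conditioning the coordinates in `R` on `z`), for every pair of distinct colors
`i, j ∉ R`, the bipartite walk from color `i` to color `j` is a `q`-norm
expander: `‖A^τ_{i,j} g − Π^τ_{i,j} g‖_q ≤ γ ‖g‖_q` for every function `g` of
the `i`-th coordinate. -/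
def IsQGammaProduct {d : ℕ} {Ω : Type} [Fintype Ω] [DecidableEq Ω]
    (μ : (Fin d → Ω) → ℝ) (q γ : ℝ) : Prop :=
  ∀ (R : Finset (Fin d)) (z : Fin d → Ω), R.card + 2 ≤ d →
    ∀ i j : Fin d, i ∉ R → j ∉ R → i ≠ j →
      ∀ g : (Fin d → Ω) → ℝ, (∀ x y, x i = y i → g x = g y) →
        pnorm (condMeasure μ R z) q
            (fun x => projE (condMeasure μ R z) {j} g x - expect (condMeasure μ R z) g)
          ≤ γ * pnorm (condMeasure μ R z) q g

set_option linter.unusedSectionVars false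

namespace PCA13

variable {d : ℕ} {Ω : Type} [Fintype Ω] [DecidableEq Ω]

/-- denominator of `projE` -/
noncomputable def den (ν : (Fin d → Ω) → ℝ) (T : Finset (Fin d)) (x : Fin d → Ω) : ℝ :=
  ∑ y, if ∀ i ∈ T, y i = x i then ν y else 0

noncomputable def num (ν : (Fin d → Ω) → ℝ) (T : Finset (Fin d)) (f : (Fin d → Ω) → ℝ)
    (x : Fin d → Ω) : ℝ :=
  ∑ y, if ∀ i ∈ T, y i = x i then ν y * f y else 0

lemma projE_eq (ν : (Fin d → Ω) → ℝ) (T : Finset (Fin d)) (f : (Fin d → Ω) → ℝ)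
    (x : Fin d → Ω) : projE ν T f x = num ν T f x / den ν T x := rfl

lemma den_nonneg {ν : (Fin d → Ω) → ℝ} (hν : ∀ y, 0 ≤ ν y) (T : Finset (Fin d))
    (x : Fin d → Ω) : 0 ≤ den ν T x := by
  refine Finset.sum_nonneg fun y _ => ?_
  split_ifs <;> simp [hν y]

lemma self_le_den {ν : (Fin d → Ω) → ℝ} (hν : ∀ y, 0 ≤ ν y) (T : Finset (Fin d))
    (x : Fin d → Ω) : ν x ≤ den ν T x := by
  have := Finset.single_le_sum (f := fun y => if ∀ i ∈ T, y i = x i then ν y else 0)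
    (fun y _ => by split_ifs <;> simp [hν y]) (Finset.mem_univ x)
  simpa [den] using this

lemma den_ne_zero {ν : (Fin d → Ω) → ℝ} (hν : ∀ y, 0 ≤ ν y) {T : Finset (Fin d)}
    {x : Fin d → Ω} (hx : ν x ≠ 0) : den ν T x ≠ 0 := by
  have h1 : 0 < ν x := lt_of_le_of_ne (hν x) (Ne.symm hx)
  exact ne_of_gt (lt_of_lt_of_le h1 (self_le_den hν T x))

lemma eq_zero_of_den_eq_zero {ν : (Fin d → Ω) → ℝ} (hν : ∀ y, 0 ≤ ν y) {T : Finset (Fin d)}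
    {x : Fin d → Ω} (h : den ν T x = 0) {y : Fin d → Ω} (hy : ∀ i ∈ T, y i = x i) :
    ν y = 0 := by
  have := (Finset.sum_eq_zero_iff_of_nonneg
    (fun z (_ : z ∈ Finset.univ) => by split_ifs <;> simp [hν z])).1 h y (Finset.mem_univ y)
  simp only [if_pos hy] at this
  exact this

lemma den_congr {ν : (Fin d → Ω) → ℝ} {T : Finset (Fin d)} {x y : Fin d → Ω}
    (hxy : ∀ i ∈ T, x i = y i) : den ν T x = den ν T y := by
  refine Finset.sum_congr rfl fun w _ => ?_
  refine if_congr ?_ rfl rfl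
  constructor
  · intro h i hi; rw [h i hi, hxy i hi]
  · intro h i hi; rw [h i hi, ← hxy i hi]

lemma num_congr {ν : (Fin d → Ω) → ℝ} {T : Finset (Fin d)} {f : (Fin d → Ω) → ℝ}
    {x y : Fin d → Ω} (hxy : ∀ i ∈ T, x i = y i) : num ν T f x = num ν T f y := by
  refine Finset.sum_congr rfl fun w _ => ?_
  refine if_congr ?_ rfl rfl
  constructor
  · intro h i hi; rw [h i hi, hxy i hi]
  · intro h i hi; rw [h i hi, ← hxy i hi]

/-- `projE ν T f` is a `T`-junta. -/
lemma projE_junta (ν : (Fin d → Ω) → ℝ) (T : Finset (Fin d)) (f : (Fin d → Ω) → ℝ)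
    {x y : Fin d → Ω} (hxy : ∀ i ∈ T, x i = y i) : projE ν T f x = projE ν T f y := by
  rw [projE_eq, projE_eq, den_congr hxy, num_congr hxy]

lemma projE_sub (ν : (Fin d → Ω) → ℝ) (T : Finset (Fin d)) (f g : (Fin d → Ω) → ℝ)
    (x : Fin d → Ω) :
    projE ν T (fun y => f y - g y) x = projE ν T f x - projE ν T g x := by
  rw [projE_eq, projE_eq, projE_eq, ← sub_div]
  congr 1
  rw [num, num, num, ← Finset.sum_sub_distrib]
  refine Finset.sum_congr rfl fun w _ => ?_
  split_ifs <;> ring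

/-- congruence of `projE` under a.e. equality of the function -/
lemma projE_congr_ae {ν : (Fin d → Ω) → ℝ} {f g : (Fin d → Ω) → ℝ}
    (h : ∀ y, ν y ≠ 0 → f y = g y) (T : Finset (Fin d)) (x : Fin d → Ω) :
    projE ν T f x = projE ν T g x := by
  rw [projE_eq, projE_eq]
  congr 1
  refine Finset.sum_congr rfl fun w _ => ?_
  split_ifs with hc
  · rcases eq_or_ne (ν w) 0 with h0 | h0
    · rw [h0, zero_mul, zero_mul]
    · rw [h w h0]
  · rfl

/-- changing the conditioning set when the conditions agree a.e. -/
lemma projE_congr_sets {ν : (Fin d → Ω) → ℝ} {T₁ T₂ : Finset (Fin d)} {x : Fin d → Ω}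
    (h : ∀ w, ν w ≠ 0 → ((∀ i ∈ T₁, w i = x i) ↔ (∀ i ∈ T₂, w i = x i)))
    (f : (Fin d → Ω) → ℝ) : projE ν T₁ f x = projE ν T₂ f x := by
  rw [projE_eq, projE_eq]
  have hden : den ν T₁ x = den ν T₂ x := by
    refine Finset.sum_congr rfl fun w _ => ?_
    rcases eq_or_ne (ν w) 0 with h0 | h0
    · split_ifs <;> simp [h0]
    · exact if_congr (h w h0) rfl rfl
  have hnum : num ν T₁ f x = num ν T₂ f x := by
    refine Finset.sum_congr rfl fun w _ => ?_
    rcases eq_or_ne (ν w) 0 with h0 | h0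
    · split_ifs <;> simp [h0]
    · exact if_congr (h w h0) rfl rfl
  rw [hden, hnum]

lemma expect_congr_ae {ν : (Fin d → Ω) → ℝ} {f g : (Fin d → Ω) → ℝ}
    (h : ∀ y, ν y ≠ 0 → f y = g y) : expect ν f = expect ν g := by
  refine Finset.sum_congr rfl fun w _ => ?_
  rcases eq_or_ne (ν w) 0 with h0 | h0
  · rw [h0, zero_mul, zero_mul]
  · rw [h w h0]

lemma projE_empty {ν : (Fin d → Ω) → ℝ} (h1 : ∑ y, ν y = 1) (f : (Fin d → Ω) → ℝ)
    (x : Fin d → Ω) : projE ν ∅ f x = expect ν f := by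
  rw [projE_eq, num, den]
  simp only [Finset.notMem_empty, false_implies, implies_true, if_true]
  rw [h1, div_one]
  rfl


lemma div_div_cancel_aux {a b c : ℝ} (hc : c ≠ 0) : (a / c) / (b / c) = a / b := by
  rcases eq_or_ne b 0 with rfl | hb
  · simp
  · rw [div_div_div_cancel_right₀]
    exact hc

/-- THE key sum-exchange lemma: reweighted expectation of a projection. -/
lemma expect_def (ν f : (Fin d → Ω) → ℝ) : expect ν f = ∑ x, ν x * f x := rfl

lemma key {ν : (Fin d → Ω) → ℝ} (hν : ∀ y, 0 ≤ ν y) (B : Finset (Fin d))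
    (ε f : (Fin d → Ω) → ℝ) (hε : ∀ y z, (∀ i ∈ B, y i = z i) → ε y = ε z) :
    ∑ y, ε y * ν y * projE ν B f y = ∑ y, ε y * ν y * f y := by
  have step1 : ∀ y, ε y * ν y * projE ν B f y
      = ∑ z, (if ∀ i ∈ B, z i = y i then ε y * ν y * (ν z * f z) / den ν B y else 0) := by
    intro y
    rw [projE_eq, num, ← mul_div_assoc, Finset.mul_sum, Finset.sum_div]
    refine Finset.sum_congr rfl fun z _ => ?_
    split_ifs with h
    · ring
    · simp
  calc (∑ y, ε y * ν y * projE ν B f y)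
      = ∑ y, ∑ z, (if ∀ i ∈ B, z i = y i then ε y * ν y * (ν z * f z) / den ν B y else 0) :=
        Finset.sum_congr rfl fun y _ => step1 y
    _ = ∑ z, ∑ y, (if ∀ i ∈ B, z i = y i then ε y * ν y * (ν z * f z) / den ν B y else 0) :=
        Finset.sum_comm
    _ = ∑ z, ∑ y, (if ∀ i ∈ B, y i = z i then (ε z * ν z * f z) * (ν y / den ν B z) else 0) := by
        refine Finset.sum_congr rfl fun z _ => Finset.sum_congr rfl fun y _ => ?_
        by_cases h : ∀ i ∈ B, z i = y i
        · rw [if_pos h, if_pos (fun i hi => (h i hi).symm),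
            hε y z (fun i hi => (h i hi).symm), den_congr (fun i hi => (h i hi).symm)]
          ring
        · rw [if_neg h, if_neg (fun hk => h (fun i hi => (hk i hi).symm))]
    _ = ∑ z, (ε z * ν z * f z) * (den ν B z / den ν B z) := by
        refine Finset.sum_congr rfl fun z _ => ?_
        have hstep : (∑ y, if (∀ i ∈ B, y i = z i) then ε z * ν z * f z * (ν y / den ν B z) else 0)
             = ∑ y, (ε z * ν z * f z) * ((if (∀ i ∈ B, y i = z i) then ν y else 0) / den ν B z) := by
          refine Finset.sum_congr rfl fun y _ => ?_
          split_ifs with h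
          · ring
          · simp
        rw [hstep, ← Finset.mul_sum, ← Finset.sum_div,
          show (∑ y, if ∀ i ∈ B, y i = z i then ν y else 0) = den ν B z from rfl]
    _ = ∑ y, ε y * ν y * f y := by
        refine Finset.sum_congr rfl fun z _ => ?_
        rcases eq_or_ne (den ν B z) 0 with h0 | h0
        · have : ν z = 0 := eq_zero_of_den_eq_zero hν h0 (fun i _ => rfl)
          simp [this]
        · rw [div_self h0, mul_one]

lemma sum_mul_projE {ν : (Fin d → Ω) → ℝ} (hν : ∀ y, 0 ≤ ν y) (B : Finset (Fin d))
    (f : (Fin d → Ω) → ℝ) : ∑ y, ν y * projE ν B f y = ∑ y, ν y * f y := by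
  have := key hν B (fun _ => (1:ℝ)) f (fun _ _ _ => rfl)
  simpa using this

/-- Tower property: `E_A E_B = E_A` for `A ⊆ B`. -/
lemma projE_projE {ν : (Fin d → Ω) → ℝ} (hν : ∀ y, 0 ≤ ν y) {A B : Finset (Fin d)}
    (hAB : A ⊆ B) (f : (Fin d → Ω) → ℝ) (x : Fin d → Ω) :
    projE ν A (projE ν B f) x = projE ν A f x := by
  rw [projE_eq, projE_eq]
  congr 1
  have h1 : ∀ g : (Fin d → Ω) → ℝ, num ν A g x
      = ∑ y, (if ∀ i ∈ A, y i = x i then (1:ℝ) else 0) * ν y * g y := by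
    intro g
    refine Finset.sum_congr rfl fun y _ => ?_
    split_ifs <;> simp
  rw [h1, h1]
  exact key hν B _ f (fun y z hyz => by
    refine if_congr ?_ rfl rfl
    constructor
    · intro h i hi; rw [← hyz i (hAB hi)]; exact h i hi
    · intro h i hi; rw [hyz i (hAB hi)]; exact h i hi)

/-- `projE` as expectation over the link. -/
lemma projE_eq_expect_cond (ν : (Fin d → Ω) → ℝ) (B : Finset (Fin d))
    (f : (Fin d → Ω) → ℝ) (x : Fin d → Ω) :
    projE ν B f x = expect (condMeasure ν B x) f := by
  rw [projE_eq, expect_def, num, Finset.sum_div]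
  refine Finset.sum_congr rfl fun y _ => ?_
  show _ = (if ∀ i ∈ B, y i = x i then ν y else 0) / den ν B x * f y
  split_ifs with h
  · ring
  · simp

lemma cond_nonneg {ν : (Fin d → Ω) → ℝ} (hν : ∀ y, 0 ≤ ν y) (B : Finset (Fin d))
    (x : Fin d → Ω) : ∀ y, 0 ≤ condMeasure ν B x y := by
  intro y
  unfold condMeasure
  refine div_nonneg ?_ (den_nonneg hν B x)
  split_ifs <;> simp [hν y]

lemma cond_apply (ν : (Fin d → Ω) → ℝ) (B : Finset (Fin d)) (x y : Fin d → Ω) :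
    condMeasure ν B x y = (if ∀ i ∈ B, y i = x i then ν y else 0) / den ν B x := rfl

lemma cond_sum_eq_one {ν : (Fin d → Ω) → ℝ} {B : Finset (Fin d)} {x : Fin d → Ω}
    (h : den ν B x ≠ 0) : ∑ y, condMeasure ν B x y = 1 := by
  simp only [cond_apply]
  rw [← Finset.sum_div, ← den, div_self h]

lemma cond_support {ν : (Fin d → Ω) → ℝ} {B : Finset (Fin d)} {x y : Fin d → Ω}
    (h : condMeasure ν B x y ≠ 0) : (∀ i ∈ B, y i = x i) ∧ ν y ≠ 0 := by
  rw [cond_apply] at h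
  by_cases hc : ∀ i ∈ B, y i = x i
  · refine ⟨hc, ?_⟩
    intro h0
    rw [if_pos hc, h0, zero_div] at h
    exact h rfl
  · rw [if_neg hc, zero_div] at h
    exact absurd rfl h


/-- Localization: conditioning on `R ⊆ T` does not change `E_T` on the link. -/
lemma projE_cond {ν : (Fin d → Ω) → ℝ} (hν : ∀ y, 0 ≤ ν y) {R T : Finset (Fin d)}
    (hRT : R ⊆ T) (f : (Fin d → Ω) → ℝ) (x y : Fin d → Ω) (hxy : ∀ i ∈ R, y i = x i) :
    projE (condMeasure ν R x) T f y = projE ν T f y := by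
  set Z := den ν R x with hZ
  have hnum : ∀ g : (Fin d → Ω) → ℝ, num (condMeasure ν R x) T g y = num ν T g y / Z := by
    intro g
    rw [num, num, Finset.sum_div]
    refine Finset.sum_congr rfl fun w _ => ?_
    by_cases hc : ∀ i ∈ T, w i = y i
    · rw [if_pos hc, if_pos hc, cond_apply]
      have hcR : ∀ i ∈ R, w i = x i := fun i hi => (hc i (hRT hi)).trans (hxy i hi)
      rw [if_pos hcR, ← hZ]
      ring
    · rw [if_neg hc, if_neg hc, zero_div]
  have hden : den (condMeasure ν R x) T y = den ν T y / Z := by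
    have h1 : ∀ (ν' : (Fin d → Ω) → ℝ), den ν' T y = num ν' T (fun _ => 1) y := by
      intro ν'
      refine Finset.sum_congr rfl fun w _ => ?_
      split_ifs <;> simp
    rw [h1, h1, hnum (fun _ => 1), num]
  rw [projE_eq, projE_eq, hnum, hden]
  rcases eq_or_ne Z 0 with h0 | h0
  · have hdz : den ν T y = 0 := by
      refine Finset.sum_eq_zero fun w _ => ?_
      split_ifs with hc
      · exact eq_zero_of_den_eq_zero hν h0 (fun i hi => (hc i (hRT hi)).trans (hxy i hi))
      · rfl
    rw [h0, hdz]
    simp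
  · exact div_div_cancel_aux h0

/-- Composition of conditionings along disjoint sets. -/
lemma cond_cond {μ : (Fin d → Ω) → ℝ} (hμ : ∀ y, 0 ≤ μ y) {A B : Finset (Fin d)}
    (hAB : Disjoint A B) (z w : Fin d → Ω) :
    condMeasure (condMeasure μ A z) B w
      = condMeasure μ (A ∪ B) (fun i => if i ∈ A then z i else w i) := by
  set z' : Fin d → Ω := fun i => if i ∈ A then z i else w i with hz'
  set Z := den μ A z with hZ
  have claim1 : ∀ y, (if ∀ i ∈ B, y i = w i then condMeasure μ A z y else 0)
      = (if ∀ i ∈ A ∪ B, y i = z' i then μ y else 0) / Z := by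
    intro y
    by_cases hB : ∀ i ∈ B, y i = w i
    · by_cases hA : ∀ i ∈ A, y i = z i
      · have hU : ∀ i ∈ A ∪ B, y i = z' i := by
          intro i hi
          rcases Finset.mem_union.1 hi with h | h
          · show y i = if i ∈ A then z i else w i
            simp only [if_pos h]; exact hA i h
          · have hiA : i ∉ A := fun hiA => (Finset.disjoint_left.1 hAB hiA) h
            show y i = if i ∈ A then z i else w i
            simp only [if_neg hiA]; exact hB i h
        rw [if_pos hB, if_pos hU, cond_apply, if_pos hA, ← hZ]
      · have hU : ¬ ∀ i ∈ A ∪ B, y i = z' i := by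
          intro hU
          exact hA (fun i hi => by
            have := hU i (Finset.mem_union_left B hi)
            simpa only [hz', if_pos hi] using this)
        rw [if_pos hB, if_neg hU, cond_apply, if_neg hA]
    · have hU : ¬ ∀ i ∈ A ∪ B, y i = z' i := by
        intro hU
        exact hB (fun i hi => by
          have hiA : i ∉ A := fun hiA => (Finset.disjoint_left.1 hAB hiA) hi
          have := hU i (Finset.mem_union_right A hi)
          simpa only [hz', if_neg hiA] using this)
      rw [if_neg hB, if_neg hU]
      simp
  have claim2 : den (condMeasure μ A z) B w = den μ (A ∪ B) z' / Z := by
    rw [den, den, Finset.sum_div]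
    exact Finset.sum_congr rfl fun y _ => claim1 y
  funext y
  rw [show condMeasure (condMeasure μ A z) B w y
      = (if ∀ i ∈ B, y i = w i then condMeasure μ A z y else 0)
        / den (condMeasure μ A z) B w from rfl, claim1 y, claim2, cond_apply]
  rcases eq_or_ne Z 0 with h0 | h0
  · rw [h0]
    simp only [div_zero, zero_div]
    symm
    rcases eq_or_ne ((if ∀ i ∈ A ∪ B, y i = z' i then μ y else 0)) 0 with hn | hn
    · rw [hn, zero_div]
    · exfalso
      by_cases hc : ∀ i ∈ A ∪ B, y i = z' i
      · have hA : ∀ i ∈ A, y i = z i := fun i hi => by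
          have := hc i (Finset.mem_union_left B hi)
          simpa only [hz', if_pos hi] using this
        have := eq_zero_of_den_eq_zero hμ (hZ ▸ h0) hA
        rw [if_pos hc, this] at hn
        exact hn rfl
      · rw [if_neg hc] at hn
        exact hn rfl
  · exact div_div_cancel_aux h0


/-- junta property -/
def Junta (T : Finset (Fin d)) (g : (Fin d → Ω) → ℝ) : Prop :=
  ∀ x y : Fin d → Ω, (∀ i ∈ T, x i = y i) → g x = g y

lemma junta_projE (ν : (Fin d → Ω) → ℝ) (T : Finset (Fin d)) (f : (Fin d → Ω) → ℝ) :
    Junta T (fun x => projE ν T f x) := fun _ _ h => projE_junta ν T f h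

lemma le_den {ν : (Fin d → Ω) → ℝ} (hν : ∀ y, 0 ≤ ν y) {T : Finset (Fin d)} {x y : Fin d → Ω}
    (hy : ∀ i ∈ T, y i = x i) : ν y ≤ den ν T x := by
  rw [den_congr (fun i hi => (hy i hi).symm)]
  exact self_le_den hν T y

lemma card_aux {C : Finset (Fin d)} {i j : Fin d} (hi : i ∉ C) (hj : j ∉ C) (hij : i ≠ j) :
    C.card + 2 ≤ d := by
  have h1 : (insert i (insert j C)).card = C.card + 2 := by
    rw [Finset.card_insert_of_notMem (by simp [Finset.mem_insert, hi, hij]),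
      Finset.card_insert_of_notMem hj]
  calc C.card + 2 = (insert i (insert j C)).card := h1.symm
    _ ≤ Finset.univ.card := Finset.card_le_univ _
    _ = d := by rw [Finset.card_univ, Fintype.card_fin]

lemma expect_sub (ν f g : (Fin d → Ω) → ℝ) :
    expect ν (fun y => f y - g y) = expect ν f - expect ν g := by
  rw [expect_def, expect_def, expect_def, ← Finset.sum_sub_distrib]
  exact Finset.sum_congr rfl fun y _ => by ring

/-- projection fixes juntas (a.e. version) -/
lemma projE_junta_fix {ν : (Fin d → Ω) → ℝ} (hν : ∀ y, 0 ≤ ν y) {C T : Finset (Fin d)}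
    {g : (Fin d → Ω) → ℝ} (hg : Junta T g)
    (hcov : ∀ v w, ν v ≠ 0 → ν w ≠ 0 → (∀ k ∈ C, v k = w k) → ∀ k ∈ T, v k = w k)
    {x : Fin d → Ω} (hx : ν x ≠ 0) : projE ν C g x = g x := by
  rw [projE_eq]
  have hnum : num ν C g x = g x * den ν C x := by
    rw [den, Finset.mul_sum, num]
    refine Finset.sum_congr rfl fun v _ => ?_
    by_cases hc : ∀ k ∈ C, v k = x k
    · rw [if_pos hc, if_pos hc]
      rcases eq_or_ne (ν v) 0 with h0 | h0
      · rw [h0, zero_mul, mul_zero]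
      · rw [hg v x (hcov v x h0 hx hc)]
        ring
    · rw [if_neg hc, if_neg hc, mul_zero]
  rw [hnum, mul_div_assoc, div_self (den_ne_zero hν hx), mul_one]

noncomputable def mom {α : Type} [Fintype α] (ν : α → ℝ) (q : ℝ) (f : α → ℝ) : ℝ :=
  ∑ x, ν x * |f x| ^ q

lemma pnorm_eq {α : Type} [Fintype α] (ν : α → ℝ) (q : ℝ) (f : α → ℝ) :
    pnorm ν q f = (mom ν q f) ^ (1/q) := rfl

lemma mom_nonneg {α : Type} [Fintype α] {ν : α → ℝ} (hν : ∀ x, 0 ≤ ν x) (q : ℝ)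
    (f : α → ℝ) : 0 ≤ mom ν q f :=
  Finset.sum_nonneg fun x _ => mul_nonneg (hν x) (Real.rpow_nonneg (abs_nonneg _) q)

lemma pnorm_nonneg {α : Type} [Fintype α] {ν : α → ℝ} (hν : ∀ x, 0 ≤ ν x) (q : ℝ)
    (f : α → ℝ) : 0 ≤ pnorm ν q f :=
  Real.rpow_nonneg (mom_nonneg hν q f) _

lemma rpow_pnorm {α : Type} [Fintype α] {ν : α → ℝ} (hν : ∀ x, 0 ≤ ν x) {q : ℝ}
    (hq0 : 0 < q) (f : α → ℝ) : (pnorm ν q f) ^ q = mom ν q f := by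
  rw [pnorm_eq, ← Real.rpow_mul (mom_nonneg hν q f), one_div_mul_cancel (ne_of_gt hq0),
    Real.rpow_one]

lemma pnorm_le_pnorm_of_mom {α : Type} [Fintype α] {ν : α → ℝ} (hν : ∀ x, 0 ≤ ν x)
    {q K : ℝ} (hq0 : 0 < q) (hK : 0 ≤ K) {F G : α → ℝ}
    (h : mom ν q F ≤ K ^ q * mom ν q G) : pnorm ν q F ≤ K * pnorm ν q G := by
  have h1 : pnorm ν q F ≤ (K ^ q * mom ν q G) ^ (1/q) := by
    rw [pnorm_eq]
    exact Real.rpow_le_rpow (mom_nonneg hν q F) h (by positivity)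
  refine h1.trans (le_of_eq ?_)
  rw [Real.mul_rpow (Real.rpow_nonneg hK q) (mom_nonneg hν q G), ← Real.rpow_mul hK,
    mul_one_div_cancel (ne_of_gt hq0), Real.rpow_one, pnorm_eq]

lemma mom_le_of_pnorm_le {α : Type} [Fintype α] {ν : α → ℝ} (hν : ∀ x, 0 ≤ ν x)
    {q K : ℝ} (hq0 : 0 < q) (hK : 0 ≤ K) {F G : α → ℝ}
    (h : pnorm ν q F ≤ K * pnorm ν q G) : mom ν q F ≤ K ^ q * mom ν q G := by
  have h1 : (pnorm ν q F) ^ q ≤ (K * pnorm ν q G) ^ q :=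
    Real.rpow_le_rpow (pnorm_nonneg hν q F) h (le_of_lt hq0)
  rw [rpow_pnorm hν hq0, Real.mul_rpow hK (pnorm_nonneg hν q G), rpow_pnorm hν hq0] at h1
  exact h1

lemma mom_congr {α : Type} [Fintype α] {ν : α → ℝ} (q : ℝ) {F G : α → ℝ}
    (h : ∀ x, ν x ≠ 0 → F x = G x) : mom ν q F = mom ν q G := by
  refine Finset.sum_congr rfl fun x _ => ?_
  rcases eq_or_ne (ν x) 0 with h0 | h0
  · rw [h0, zero_mul, zero_mul]
  · rw [h x h0]

lemma pnorm_congr {α : Type} [Fintype α] {ν : α → ℝ} (q : ℝ) {F G : α → ℝ}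
    (h : ∀ x, ν x ≠ 0 → F x = G x) : pnorm ν q F = pnorm ν q G := by
  rw [pnorm_eq, pnorm_eq, mom_congr q h]

lemma pnorm_eq_zero {α : Type} [Fintype α] {ν : α → ℝ} {q : ℝ} (hq0 : q ≠ 0) {F : α → ℝ}
    (h : ∀ x, ν x ≠ 0 → F x = 0) : pnorm ν q F = 0 := by
  have : mom ν q F = 0 := by
    refine Finset.sum_eq_zero fun x _ => ?_
    rcases eq_or_ne (ν x) 0 with h0 | h0
    · rw [h0, zero_mul]
    · rw [h x h0, abs_zero, Real.zero_rpow hq0, mul_zero]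
  rw [pnorm_eq, this, Real.zero_rpow (one_div_ne_zero hq0)]

/-- Minkowski's inequality for `pnorm`. -/
lemma pnorm_add_le {α : Type} [Fintype α] {ν : α → ℝ} (hν : ∀ x, 0 ≤ ν x) {q : ℝ}
    (hq : 1 ≤ q) (F G : α → ℝ) :
    pnorm ν q (fun x => F x + G x) ≤ pnorm ν q F + pnorm ν q G := by
  have hq0 : q ≠ 0 := by positivity
  have hkey : ∀ H : α → ℝ, mom ν q H = ∑ x, |ν x ^ (1/q) * H x| ^ q := by
    intro H
    refine Finset.sum_congr rfl fun x _ => ?_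
    rw [abs_mul, abs_of_nonneg (Real.rpow_nonneg (hν x) _),
      Real.mul_rpow (Real.rpow_nonneg (hν x) _) (abs_nonneg _),
      ← Real.rpow_mul (hν x), one_div_mul_cancel hq0, Real.rpow_one]
  rw [pnorm_eq, pnorm_eq, pnorm_eq, hkey, hkey, hkey]
  have h2 : (∑ x, |ν x ^ (1/q) * (F x + G x)| ^ q)
      = ∑ x, |(ν x ^ (1/q) * F x) + (ν x ^ (1/q) * G x)| ^ q := by
    refine Finset.sum_congr rfl fun x _ => ?_
    rw [mul_add]
  rw [h2]
  exact Real.Lp_add_le Finset.univ _ _ hq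

/-- pointwise conditional Jensen -/
lemma abs_projE_rpow_le {ν : (Fin d → Ω) → ℝ} (hν : ∀ y, 0 ≤ ν y) {q : ℝ} (hq : 1 ≤ q)
    {B : Finset (Fin d)} {x : Fin d → Ω} (hx : den ν B x ≠ 0) (f : (Fin d → Ω) → ℝ) :
    |projE ν B f x| ^ q ≤ projE ν B (fun y => |f y| ^ q) x := by
  set w : (Fin d → Ω) → ℝ := fun y => (if ∀ i ∈ B, y i = x i then ν y else 0) / den ν B x
    with hw
  have hw0 : ∀ y, 0 ≤ w y := by
    intro y
    rw [hw]
    refine div_nonneg ?_ (den_nonneg hν B x)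
    split_ifs <;> simp [hν y]
  have hw1 : ∑ y, w y = 1 := by
    rw [hw, ← Finset.sum_div, ← den, div_self hx]
  have hproj : ∀ g : (Fin d → Ω) → ℝ, projE ν B g x = ∑ y, w y * g y := by
    intro g
    rw [projE_eq, num, Finset.sum_div]
    refine Finset.sum_congr rfl fun y _ => ?_
    rw [hw]
    dsimp only
    split_ifs with h
    · ring
    · simp
  rw [hproj, hproj]
  have habs : |∑ y, w y * f y| ≤ ∑ y, w y * |f y| := by
    refine (Finset.abs_sum_le_sum_abs _ _).trans (le_of_eq ?_)
    refine Finset.sum_congr rfl fun y _ => ?_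
    rw [abs_mul, abs_of_nonneg (hw0 y)]
  calc |∑ y, w y * f y| ^ q ≤ (∑ y, w y * |f y|) ^ q := by
        refine Real.rpow_le_rpow (abs_nonneg _) habs (by positivity)
    _ ≤ ∑ y, w y * |f y| ^ q :=
        Real.rpow_arith_mean_le_arith_mean_rpow Finset.univ w (fun y => |f y|)
          (fun y _ => hw0 y) hw1 (fun y _ => abs_nonneg _) hq

/-- contractivity of conditional expectation in `L^q` (moment form) -/
lemma mom_projE_le {ν : (Fin d → Ω) → ℝ} (hν : ∀ y, 0 ≤ ν y) {q : ℝ} (hq : 1 ≤ q)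
    (B : Finset (Fin d)) (f : (Fin d → Ω) → ℝ) :
    mom ν q (fun x => projE ν B f x) ≤ mom ν q f := by
  calc mom ν q (fun x => projE ν B f x)
      ≤ ∑ x, ν x * projE ν B (fun y => |f y| ^ q) x := by
        refine Finset.sum_le_sum fun x _ => ?_
        rcases eq_or_ne (ν x) 0 with h0 | h0
        · rw [h0, zero_mul, zero_mul]
        · exact mul_le_mul_of_nonneg_left
            (abs_projE_rpow_le hν hq (den_ne_zero hν h0) f) (hν x)
    _ = ∑ x, ν x * |f x| ^ q := sum_mul_projE hν B _
    _ = mom ν q f := rfl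

lemma pnorm_projE_le {ν : (Fin d → Ω) → ℝ} (hν : ∀ y, 0 ≤ ν y) {q : ℝ} (hq : 1 ≤ q)
    (B : Finset (Fin d)) (f : (Fin d → Ω) → ℝ) :
    pnorm ν q (fun x => projE ν B f x) ≤ pnorm ν q f := by
  rw [pnorm_eq, pnorm_eq]
  exact Real.rpow_le_rpow (mom_nonneg hν q _) (mom_projE_le hν hq B f) (by positivity)

/-- decomposition of the moment over links -/
lemma mom_eq_sum_links {ν : (Fin d → Ω) → ℝ} (hν : ∀ y, 0 ≤ ν y) (q : ℝ)
    (B : Finset (Fin d)) (H : (Fin d → Ω) → ℝ) :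
    mom ν q H = ∑ x, ν x * mom (condMeasure ν B x) q H := by
  have h1 : ∀ x, mom (condMeasure ν B x) q H = projE ν B (fun y => |H y| ^ q) x := by
    intro x
    rw [projE_eq_expect_cond, mom, expect_def]
  calc mom ν q H = ∑ x, ν x * |H x| ^ q := rfl
    _ = ∑ x, ν x * projE ν B (fun y => |H y| ^ q) x := (sum_mul_projE hν B _).symm
    _ = ∑ x, ν x * mom (condMeasure ν B x) q H := by
        refine Finset.sum_congr rfl fun x _ => ?_
        rw [h1 x]

/-- integration of per-link bounds -/
lemma pnorm_le_of_links {ν : (Fin d → Ω) → ℝ} (hν : ∀ y, 0 ≤ ν y) {q K : ℝ}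
    (hq0 : 0 < q) (hK : 0 ≤ K) (B : Finset (Fin d)) {F G : (Fin d → Ω) → ℝ}
    (h : ∀ x, ν x ≠ 0 → mom (condMeasure ν B x) q F ≤ K ^ q * mom (condMeasure ν B x) q G) :
    pnorm ν q F ≤ K * pnorm ν q G := by
  refine pnorm_le_pnorm_of_mom hν hq0 hK ?_
  rw [mom_eq_sum_links hν q B F, mom_eq_sum_links hν q B G, Finset.mul_sum]
  refine Finset.sum_le_sum fun x _ => ?_
  rcases eq_or_ne (ν x) 0 with h0 | h0
  · rw [h0, zero_mul, zero_mul, mul_zero]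
  · rw [← mul_assoc, mul_comm (K ^ q) (ν x), mul_assoc]
    exact mul_le_mul_of_nonneg_left (h x h0) (hν x)


/-- Step V: `‖(E_{B∪{i}} - E_B) u‖_q ≤ γ ‖u‖_q` in the link of `A`,
for `u` a `(B∪{j})`-junta. -/
lemma lemV {μ : (Fin d → Ω) → ℝ} (hμ0 : ∀ x, 0 ≤ μ x) {q γ : ℝ} (hq : 1 < q) (hγ : 0 ≤ γ)
    (hX : IsQGammaProduct μ q γ)
    {A B : Finset (Fin d)} {i j : Fin d} (z : Fin d → Ω)
    (hAB : Disjoint A B) (hiA : i ∉ A) (hiB : i ∉ B) (hjA : j ∉ A) (hjB : j ∉ B)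
    (hij : i ≠ j) {u : (Fin d → Ω) → ℝ} (hu : Junta (insert j B) u) :
    pnorm (condMeasure μ A z) q
      (fun x => projE (condMeasure μ A z) (insert i B) u x
        - projE (condMeasure μ A z) B u x)
      ≤ γ * pnorm (condMeasure μ A z) q u := by
  have hq0 : (0:ℝ) < q := lt_trans one_pos hq
  have hσ0 : ∀ y, 0 ≤ condMeasure μ A z y := cond_nonneg hμ0 A z
  refine pnorm_le_of_links hσ0 hq0 hγ B ?_
  intro x hx
  obtain ⟨hxA, hμx⟩ := cond_support hx
  have hρ : condMeasure (condMeasure μ A z) B x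
      = condMeasure μ (A ∪ B) (fun k => if k ∈ A then z k else x k) :=
    cond_cond hμ0 hAB z x
  set z' : Fin d → Ω := fun k => if k ∈ A then z k else x k with hz'
  have hρ0 : ∀ y, 0 ≤ condMeasure μ (A ∪ B) z' y := cond_nonneg hμ0 _ _
  have hxz' : ∀ k ∈ A ∪ B, x k = z' k := by
    intro k hk
    show x k = if k ∈ A then z k else x k
    by_cases hkA : k ∈ A
    · rw [if_pos hkA]; exact hxA k hkA
    · rw [if_neg hkA]
  have hρmass : den μ (A ∪ B) z' ≠ 0 := by
    have h1 : μ x ≤ den μ (A ∪ B) z' := le_den hμ0 hxz'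
    have h2 : 0 < μ x := lt_of_le_of_ne (hμ0 x) (Ne.symm hμx)
    exact ne_of_gt (lt_of_lt_of_le h2 h1)
  set ρ := condMeasure μ (A ∪ B) z' with hρdef
  have hsuppρ : ∀ w, ρ w ≠ 0 → (∀ k ∈ A ∪ B, w k = z' k) ∧ μ w ≠ 0 :=
    fun w hw => cond_support hw
  -- on the support of ρ, `u` coincides with an honest `j`-junta
  have huu : ∀ w, ρ w ≠ 0 → u w = projE ρ {j} u w := by
    intro w hw
    obtain ⟨hwAB, hμw⟩ := hsuppρ w hw
    symm
    refine projE_junta_fix hρ0 hu ?_ hw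
    intro v v' hv hv' hvv' k hk
    rcases Finset.mem_insert.1 hk with rfl | hkB
    · exact hvv' k (Finset.mem_singleton_self k)
    · exact ((hsuppρ v hv).1 k (Finset.mem_union_right A hkB)).trans
        (((hsuppρ v' hv').1 k (Finset.mem_union_right A hkB)).symm)
  have hujunta : ∀ a b : Fin d → Ω, a j = b j → projE ρ {j} u a = projE ρ {j} u b := by
    intro a b hab
    refine projE_junta ρ {j} u ?_
    intro k hk
    rw [Finset.mem_singleton] at hk
    subst hk
    exact hab
  have hcard : (A ∪ B).card + 2 ≤ d :=
    card_aux (C := A ∪ B) (by simp [hiA, hiB]) (by simp [hjA, hjB]) hij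
  have hXb := hX (A ∪ B) z' hcard j i (by simp [hjA, hjB]) (by simp [hiA, hiB])
    (Ne.symm hij) (fun y => projE ρ {j} u y) hujunta
  -- identify the function on the support of ρ
  have hae : ∀ w, ρ w ≠ 0 →
      (projE (condMeasure μ A z) (insert i B) u w - projE (condMeasure μ A z) B u w)
      = projE ρ {i} (fun y => projE ρ {j} u y) w
        - expect ρ (fun y => projE ρ {j} u y) := by
    intro w hw
    obtain ⟨hwAB, hμw⟩ := hsuppρ w hw
    have hwB : ∀ k ∈ B, w k = x k := by
      intro k hk
      have hkA : k ∉ A := fun hkA => (Finset.disjoint_left.1 hAB hkA) hk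
      have h1 := hwAB k (Finset.mem_union_right A hk)
      have h2 : z' k = x k := by
        show (if k ∈ A then z k else x k) = x k
        rw [if_neg hkA]
      rw [h1, h2]
    have e1 : projE (condMeasure μ A z) (insert i B) u w = projE ρ (insert i B) u w := by
      rw [← hρ]
      exact (projE_cond hσ0 (Finset.subset_insert i B) u x w hwB).symm
    have e2 : projE (condMeasure μ A z) B u w = projE ρ B u w := by
      rw [← hρ]
      exact (projE_cond hσ0 (le_refl B) u x w hwB).symm
    have e3 : projE ρ (insert i B) u w = projE ρ {i} u w := by
      refine projE_congr_sets ?_ u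
      intro v hv
      constructor
      · intro h k hk
        rw [Finset.mem_singleton] at hk
        exact h k (by rw [hk]; exact Finset.mem_insert_self i B)
      · intro h k hk
        rcases Finset.mem_insert.1 hk with rfl | hkB
        · exact h k (Finset.mem_singleton_self k)
        · exact ((hsuppρ v hv).1 k (Finset.mem_union_right A hkB)).trans
            ((hwAB k (Finset.mem_union_right A hkB)).symm)
    have e4 : projE ρ B u w = projE ρ ∅ u w := by
      refine projE_congr_sets ?_ u
      intro v hv
      constructor
      · intro _ k hk
        exact absurd hk (Finset.notMem_empty k)
      · intro _ k hk
        exact ((hsuppρ v hv).1 k (Finset.mem_union_right A hk)).trans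
          ((hwAB k (Finset.mem_union_right A hk)).symm)
    have e5 : projE ρ ∅ u w = expect ρ u := projE_empty (cond_sum_eq_one hρmass) u w
    rw [e1, e2, e3, e4, e5, projE_congr_ae huu {i} w, expect_congr_ae huu]
  have hρeq : condMeasure (condMeasure μ A z) B x = ρ := hρ
  rw [hρeq]
  calc mom ρ q (fun w => projE (condMeasure μ A z) (insert i B) u w
        - projE (condMeasure μ A z) B u w)
      = mom ρ q (fun w => projE ρ {i} (fun y => projE ρ {j} u y) w
          - expect ρ (fun y => projE ρ {j} u y)) := mom_congr q hae
    _ ≤ γ ^ q * mom ρ q (fun y => projE ρ {j} u y) :=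
        mom_le_of_pnorm_le hρ0 hq0 hγ hXb
    _ = γ ^ q * mom ρ q u := by
        rw [mom_congr q (fun w hw => (huu w hw).symm)]


/-- Step U: `‖(E_{i} - E) u‖_q ≤ γ|S'| ‖u‖_q` in the link of `A`, for `u` an `S'`-junta. -/
lemma lemU {μ : (Fin d → Ω) → ℝ} (hμ0 : ∀ x, 0 ≤ μ x) {q γ : ℝ} (hq : 1 < q) (hγ : 0 ≤ γ)
    (hX : IsQGammaProduct μ q γ) {A : Finset (Fin d)} {i : Fin d} (z : Fin d → Ω)
    (hiA : i ∉ A) (hmass : den μ A z ≠ 0) :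
    ∀ S' : Finset (Fin d), Disjoint S' (insert i A) →
      ∀ u : (Fin d → Ω) → ℝ, Junta S' u →
        pnorm (condMeasure μ A z) q
            (fun x => projE (condMeasure μ A z) {i} u x - expect (condMeasure μ A z) u)
          ≤ γ * S'.card * pnorm (condMeasure μ A z) q u := by
  have hq0 : (0:ℝ) < q := lt_trans one_pos hq
  have hσ0 : ∀ y, 0 ≤ condMeasure μ A z y := cond_nonneg hμ0 A z
  intro S'
  induction S' using Finset.induction_on with
  | empty =>
    intro _ u hu
    rcases isEmpty_or_nonempty (Fin d → Ω) with he | hne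
    · have hz : ∀ h : (Fin d → Ω) → ℝ, pnorm (condMeasure μ A z) q h = 0 := by
        intro h
        rw [pnorm_eq, mom, Finset.univ_eq_empty, Finset.sum_empty,
          Real.zero_rpow (one_div_ne_zero (ne_of_gt hq0))]
      rw [hz, hz]
      simp
    · obtain ⟨x₀⟩ := hne
      have hconst : ∀ y, u y = u x₀ := fun y => hu y x₀ (by simp)
      have hae : ∀ x, condMeasure μ A z x ≠ 0 →
          (projE (condMeasure μ A z) {i} u x - expect (condMeasure μ A z) u) = 0 := by
        intro x hx
        have h1 : projE (condMeasure μ A z) {i} u x = u x₀ := by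
          rw [projE_congr_ae (g := fun _ => u x₀) (fun y _ => hconst y) {i} x, projE_eq]
          have hnum : num (condMeasure μ A z) {i} (fun _ => u x₀) x
              = u x₀ * den (condMeasure μ A z) {i} x := by
            rw [den, Finset.mul_sum, num]
            refine Finset.sum_congr rfl fun v _ => ?_
            split_ifs <;> ring
          rw [hnum, mul_div_assoc, div_self (den_ne_zero hσ0 hx), mul_one]
        have h2 : expect (condMeasure μ A z) u = u x₀ := by
          rw [expect_congr_ae (g := fun _ => u x₀) (fun y _ => hconst y), expect_def,
            ← Finset.sum_mul, cond_sum_eq_one hmass, one_mul]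
        rw [h1, h2, sub_self]
      rw [pnorm_eq_zero (ne_of_gt hq0) hae]
      simp
  | @insert j s hjs IH =>
    intro hdisj u hu
    set σ := condMeasure μ A z with hσdef
    have hdisj_s : Disjoint s (insert i A) :=
      Finset.disjoint_of_subset_left (Finset.subset_insert j s) hdisj
    have hjs_i : j ∉ insert i A := Finset.disjoint_left.1 hdisj (Finset.mem_insert_self j s)
    have hji : j ≠ i := fun h => hjs_i (h ▸ Finset.mem_insert_self i A)
    have hjA : j ∉ A := fun h => hjs_i (Finset.mem_insert_of_mem h)
    have his : i ∉ s := fun h => (Finset.disjoint_left.1 hdisj_s h) (Finset.mem_insert_self i A)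
    have hAs : Disjoint A s :=
      Finset.disjoint_of_subset_left (Finset.subset_insert i A) hdisj_s.symm
    set g₂ : (Fin d → Ω) → ℝ := fun y => projE σ s u y with hg₂def
    have hg₂w : ∀ w, g₂ w = projE σ s u w := fun _ => rfl
    have hg₂ : Junta s g₂ := fun a b h => projE_junta σ s u h
    have hdecomp : (fun x => projE σ {i} u x - expect σ u)
        = fun x => (projE σ {i} (fun y => u y - g₂ y) x - expect σ (fun y => u y - g₂ y))
            + (projE σ {i} g₂ x - expect σ g₂) := by
      funext x
      rw [projE_sub, expect_sub]
      ring
    rw [hdecomp]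
    have hbound2 : pnorm σ q (fun x => projE σ {i} g₂ x - expect σ g₂)
        ≤ γ * s.card * pnorm σ q u := by
      refine le_trans (IH hdisj_s g₂ hg₂) ?_
      have h1 : pnorm σ q g₂ ≤ pnorm σ q u := pnorm_projE_le hσ0 (le_of_lt hq) s u
      exact mul_le_mul_of_nonneg_left h1 (by positivity)
    have hbound1 : pnorm σ q (fun x => projE σ {i} (fun y => u y - g₂ y) x
        - expect σ (fun y => u y - g₂ y)) ≤ γ * pnorm σ q u := by
      have hexp0 : expect σ (fun y => u y - g₂ y) = 0 := by
        rw [expect_sub]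
        have h1 : expect σ g₂ = expect σ u := by
          rw [expect_def, expect_def]
          exact sum_mul_projE hσ0 s u
        rw [h1, sub_self]
      have heq1 : (fun x => projE σ {i} (fun y => u y - g₂ y) x
            - expect σ (fun y => u y - g₂ y))
          = fun x => projE σ {i}
              (fun y => projE σ (insert i s) (fun v => u v - g₂ v) y) x := by
        funext x
        rw [hexp0, sub_zero,
          projE_projE hσ0 (Finset.singleton_subset_iff.2 (Finset.mem_insert_self i s))]
      rw [heq1]
      refine le_trans (pnorm_projE_le hσ0 (le_of_lt hq) {i} _) ?_
      have hae : ∀ w, σ w ≠ 0 → projE σ (insert i s) (fun v => u v - g₂ v) w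
          = projE σ (insert i s) u w - projE σ s u w := by
        intro w hw
        rw [projE_sub]
        congr 1
        have hfix : projE σ (insert i s) g₂ w = g₂ w := by
          refine projE_junta_fix hσ0 hg₂ ?_ hw
          intro v v' _ _ hvv' k hk
          exact hvv' k (Finset.mem_insert_of_mem hk)
        rw [hfix, hg₂w]
      rw [pnorm_congr q hae]
      exact lemV hμ0 hq hγ hX z hAs hiA his hjA hjs hji.symm hu
    refine le_trans (pnorm_add_le hσ0 (le_of_lt hq) _ _) ?_
    refine le_trans (add_le_add hbound1 hbound2) (le_of_eq ?_)
    rw [Finset.card_insert_of_notMem hjs]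
    push_cast
    ring


/-- Step T: `‖(E_{insert i A} - E_A) g‖_q ≤ γ|T'\A| ‖g‖_q` for `g` a `T'`-junta. -/
lemma lemT {μ : (Fin d → Ω) → ℝ} (hμ0 : ∀ x, 0 ≤ μ x) {q γ : ℝ} (hq : 1 < q) (hγ : 0 ≤ γ)
    (hX : IsQGammaProduct μ q γ) {A T' : Finset (Fin d)} {i : Fin d}
    (hiA : i ∉ A) (hiT' : i ∉ T') {g : (Fin d → Ω) → ℝ} (hg : Junta T' g) :
    pnorm μ q (fun x => projE μ (insert i A) g x - projE μ A g x)
      ≤ γ * ((T' \ A).card) * pnorm μ q g := by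
  have hq0 : (0:ℝ) < q := lt_trans one_pos hq
  have hK : (0:ℝ) ≤ γ * ((T' \ A).card) := by positivity
  refine pnorm_le_of_links hμ0 hq0 hK A ?_
  intro x hx
  have hmass : den μ A x ≠ 0 := den_ne_zero hμ0 hx
  have hσ0 : ∀ y, 0 ≤ condMeasure μ A x y := cond_nonneg hμ0 A x
  set σ := condMeasure μ A x with hσdef
  have hsupp : ∀ w, σ w ≠ 0 → (∀ k ∈ A, w k = x k) ∧ μ w ≠ 0 := fun w hw => cond_support hw
  have hgg' : ∀ w, σ w ≠ 0 → g w = projE σ (T' \ A) g w := by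
    intro w hw
    symm
    refine projE_junta_fix hσ0 hg ?_ hw
    intro v v' hv hv' hvv' k hk
    by_cases hkA : k ∈ A
    · exact ((hsupp v hv).1 k hkA).trans (((hsupp v' hv').1 k hkA).symm)
    · exact hvv' k (Finset.mem_sdiff.2 ⟨hk, hkA⟩)
  have hae : ∀ w, σ w ≠ 0 →
      (projE μ (insert i A) g w - projE μ A g w)
      = projE σ {i} (fun y => projE σ (T' \ A) g y) w
        - expect σ (fun y => projE σ (T' \ A) g y) := by
    intro w hw
    obtain ⟨hwA, hμw⟩ := hsupp w hw
    have e1 : projE μ (insert i A) g w = projE σ (insert i A) g w :=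
      (projE_cond hμ0 (Finset.subset_insert i A) g x w hwA).symm
    have e2 : projE μ A g w = projE σ A g w :=
      (projE_cond hμ0 (le_refl A) g x w hwA).symm
    have e3 : projE σ (insert i A) g w = projE σ {i} g w := by
      refine projE_congr_sets ?_ g
      intro v hv
      constructor
      · intro h k hk
        rw [Finset.mem_singleton] at hk
        exact h k (by rw [hk]; exact Finset.mem_insert_self i A)
      · intro h k hk
        rcases Finset.mem_insert.1 hk with rfl | hkA
        · exact h k (Finset.mem_singleton_self k)
        · exact ((hsupp v hv).1 k hkA).trans ((hwA k hkA).symm)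
    have e4 : projE σ A g w = projE σ ∅ g w := by
      refine projE_congr_sets ?_ g
      intro v hv
      constructor
      · intro _ k hk
        exact absurd hk (Finset.notMem_empty k)
      · intro _ k hk
        exact ((hsupp v hv).1 k hk).trans ((hwA k hk).symm)
    have e5 : projE σ ∅ g w = expect σ g := projE_empty (cond_sum_eq_one hmass) g w
    rw [e1, e2, e3, e4, e5, projE_congr_ae hgg' {i} w, expect_congr_ae hgg']
  rw [mom_congr q hae]
  have hdisjTA : Disjoint (T' \ A) (insert i A) := by
    rw [Finset.disjoint_left]
    intro k hk hk2
    rcases Finset.mem_insert.1 hk2 with rfl | hkA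
    · exact hiT' (Finset.mem_sdiff.1 hk).1
    · exact (Finset.mem_sdiff.1 hk).2 hkA
  have hU := lemU hμ0 hq hγ hX (A := A) (i := i) x hiA hmass (T' \ A) hdisjTA
    (fun y => projE σ (T' \ A) g y) (fun a b h => projE_junta σ (T' \ A) g h)
  have hmom := mom_le_of_pnorm_le hσ0 hq0 hK hU
  refine le_trans hmom (le_of_eq ?_)
  rw [mom_congr q (fun w hw => (hgg' w hw).symm)]

/-- Phase I telescoping. -/
lemma phaseI {μ : (Fin d → Ω) → ℝ} (hμ0 : ∀ x, 0 ≤ μ x) {q γ : ℝ} (hq : 1 < q) (hγ : 0 ≤ γ)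
    (hX : IsQGammaProduct μ q γ) (T T' : Finset (Fin d)) {g : (Fin d → Ω) → ℝ}
    (hg : Junta T' g) :
    ∀ s : Finset (Fin d), s ⊆ T \ T' →
      pnorm μ q (fun x => projE μ ((T ∩ T') ∪ s) g x - projE μ (T ∩ T') g x)
        ≤ γ * s.card * T'.card * pnorm μ q g := by
  have hq0 : (0:ℝ) < q := lt_trans one_pos hq
  intro s
  induction s using Finset.induction_on with
  | empty =>
    intro _
    rw [Finset.union_empty]
    have h0 : pnorm μ q (fun x => projE μ (T ∩ T') g x - projE μ (T ∩ T') g x) = 0 :=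
      pnorm_eq_zero (ne_of_gt hq0) (fun x _ => sub_self _)
    rw [h0]
    simp
  | @insert i s his IH =>
    intro hsub
    have hsub_s : s ⊆ T \ T' := (Finset.subset_insert i s).trans hsub
    have hiTT' : i ∈ T \ T' := hsub (Finset.mem_insert_self i s)
    have hiT' : i ∉ T' := (Finset.mem_sdiff.1 hiTT').2
    have hiR : i ∉ (T ∩ T') ∪ s := by
      rw [Finset.mem_union]
      rintro (h | h)
      · exact hiT' (Finset.mem_inter.1 h).2
      · exact his h
    have hunion : (T ∩ T') ∪ insert i s = insert i ((T ∩ T') ∪ s) := Finset.union_insert i (T ∩ T') s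
    rw [hunion]
    have hdecomp : (fun x => projE μ (insert i ((T ∩ T') ∪ s)) g x - projE μ (T ∩ T') g x)
        = fun x => (projE μ (insert i ((T ∩ T') ∪ s)) g x - projE μ ((T ∩ T') ∪ s) g x)
            + (projE μ ((T ∩ T') ∪ s) g x - projE μ (T ∩ T') g x) := by
      funext x; ring
    rw [hdecomp]
    refine le_trans (pnorm_add_le hμ0 (le_of_lt hq) _ _) ?_
    have h1' : pnorm μ q (fun x => projE μ (insert i ((T ∩ T') ∪ s)) g x
        - projE μ ((T ∩ T') ∪ s) g x) ≤ γ * T'.card * pnorm μ q g := by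
      refine le_trans (lemT hμ0 hq hγ hX hiR hiT' hg) ?_
      refine mul_le_mul_of_nonneg_right ?_ (pnorm_nonneg hμ0 q g)
      refine mul_le_mul_of_nonneg_left ?_ hγ
      exact_mod_cast Finset.card_le_card (Finset.sdiff_subset)
    refine le_trans (add_le_add h1' (IH hsub_s)) (le_of_eq ?_)
    rw [Finset.card_insert_of_notMem his]
    push_cast
    ring

end PCA13

/-- composition of projections approximates the intersection
projection on a `(q,γ)`-product:
`‖E_T E_{T'} f − E_{T∩T'} f‖_q ≤ γ |T||T'| ‖f‖_q`. -/
theorem proj_composition_approx {d : ℕ} {Ω : Type} [Fintype Ω] [DecidableEq Ω]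
    (μ : (Fin d → Ω) → ℝ) (hμ0 : ∀ x, 0 ≤ μ x) (hμ1 : ∑ x, μ x = 1)
    (q γ : ℝ) (hq : 1 < q) (hγ : 0 ≤ γ) (hX : IsQGammaProduct μ q γ)
    (f : (Fin d → Ω) → ℝ) (T T' : Finset (Fin d)) :
    pnorm μ q (fun x => projE μ T (projE μ T' f) x - projE μ (T ∩ T') f x)
      ≤ γ * T.card * T'.card * pnorm μ q f := by
  have hq0 : (0:ℝ) < q := lt_trans one_pos hq
  have hg : PCA13.Junta T' (fun x => projE μ T' f x) := PCA13.junta_projE μ T' f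
  have e1 : (T ∩ T') ∪ (T \ T') = T := by
    ext a
    simp only [Finset.mem_union, Finset.mem_inter, Finset.mem_sdiff]
    tauto
  have hrw : (fun x => projE μ T (projE μ T' f) x - projE μ (T ∩ T') f x)
      = fun x => projE μ ((T ∩ T') ∪ (T \ T')) (fun y => projE μ T' f y) x
          - projE μ (T ∩ T') (fun y => projE μ T' f y) x := by
    funext x
    rw [e1, PCA13.projE_projE hμ0 Finset.inter_subset_right f x]
  rw [hrw]
  refine le_trans (PCA13.phaseI hμ0 hq hγ hX T T' hg (T \ T') (le_refl _)) ?_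
  have hc : ((T \ T').card : ℝ) ≤ T.card := by
    exact_mod_cast Finset.card_le_card Finset.sdiff_subset
  have hp : pnorm μ q (fun y => projE μ T' f y) ≤ pnorm μ q f :=
    PCA13.pnorm_projE_le hμ0 (le_of_lt hq) T' f
  have h1 : γ * ((T \ T').card : ℝ) * T'.card ≤ γ * T.card * T'.card := by
    refine mul_le_mul_of_nonneg_right (mul_le_mul_of_nonneg_left hc hγ) (by positivity)
  refine mul_le_mul h1 hp (PCA13.pnorm_nonneg hμ0 q _) ?_
  have : (0:ℝ) ≤ (T.card : ℝ) * T'.card := by positivity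
  nlinarith
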